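/- Let G be a group and k a field. Let 0 → V₁ → V₂ → V₃ → 0 be a short exact sequence of k-linear G-representations, and let 𝓜 be a collection of pairs (H,φ) of subgroups H ≤ G with characters φ : H → kˣ, closed under replacing H by any smaller subgroup in the collection (intersections). If V₂ is spanned by the union of the subspaces V₂^{(H,φ)} over (H,φ) ∈ 𝓜, then V₃ is spanned by the union of V₃^{(H,φ)} over (H,φ) ∈ 𝓜, and V₁ is spanned by the union of V₁^{(H,φ)} over (H,φ) ∈ 𝓜. -/
import Mathlib

/-- The `(H,φ)`-isotypic subspace `V^{(H,φ)} = {v | h·v = φ(h)v for all h ∈ H}`. -/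
def eigSubspace {k G V : Type*} [Field k] [Group G] [AddCommGroup V] [Module k V]
    (ρ : Representation k G V) (H : Subgroup G) (φ : H →* kˣ) : Submodule k V where
  carrier := {v | ∀ h : H, ρ h v = (φ h : k) • v}
  add_mem' := by
    intro a b ha hb h
    simp [map_add, ha h, hb h, smul_add]
  zero_mem' := by intro h; simp
  smul_mem' := by
    intro c v hv h
    rw [map_smul, hv h, smul_comm]

section Aux

variable {k G : Type*} [Field k] [Group G]

lemma eig_mem_iff {V : Type*} [AddCommGroup V] [Module k V] (ρ : Representation k G V)
    (H : Subgroup G) (φ : H →* kˣ) (v : V) :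
    v ∈ eigSubspace ρ H φ ↔ ∀ h : H, ρ h v = (φ h : k) • v := Iff.rfl

/-- Restriction of an eigenvector to a smaller subgroup. -/
lemma eig_restrict {V : Type*} [AddCommGroup V] [Module k V] (ρ : Representation k G V)
    {H K : Subgroup G} (hle : K ≤ H) (φ : H →* kˣ) {v : V} (hv : v ∈ eigSubspace ρ H φ) :
    v ∈ eigSubspace ρ K (φ.comp (Subgroup.inclusion hle)) := by
  intro h
  exact hv ⟨h, hle h.2⟩

/-- Simultaneous eigenvectors for distinct characters of a fixed subgroup
are linearly independent; in particular a vanishing sum has vanishing terms. -/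
lemma eig_indep {V : Type*} [AddCommGroup V] [Module k V] (ρ : Representation k G V)
    (H : Subgroup G) :
    ∀ (S : Finset (↥H →* kˣ)) (v : (↥H →* kˣ) → V),
      (∀ ψ ∈ S, v ψ ∈ eigSubspace ρ H ψ) → (∑ ψ ∈ S, v ψ) = 0 → ∀ ψ ∈ S, v ψ = 0 := by
  classical
  intro S
  induction S using Finset.strongInduction with
  | _ S ih =>
    intro v hv hsum ψ hψ
    by_cases hsingle : ∀ φ ∈ S, φ = ψ
    · have hS : S = {ψ} := by
        apply Finset.eq_singleton_iff_unique_mem.mpr ⟨hψ, hsingle⟩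
      rw [hS, Finset.sum_singleton] at hsum
      exact hsum
    · push_neg at hsingle
      obtain ⟨φ₀, hφ₀S, hφ₀⟩ := hsingle
      -- find h with φ₀ h ≠ ψ h
      have : ∃ h : ↥H, φ₀ h ≠ ψ h := by
        by_contra hc
        push_neg at hc
        exact hφ₀ (MonoidHom.ext hc)
      obtain ⟨h, hne⟩ := this
      have hnek : ((φ₀ h : kˣ) : k) - ((ψ h : kˣ) : k) ≠ 0 := by
        intro hc
        exact hne (Units.ext (by linear_combination hc))
      -- key vanishing sum after applying ρ h - ψ h
      set v' : (↥H →* kˣ) → V := fun χ => (((χ h : kˣ) : k) - ((ψ h : kˣ) : k)) • v χ with hv'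
      have h1 : ∑ χ ∈ S, ((χ h : kˣ) : k) • v χ = 0 := by
        have : ∑ χ ∈ S, ρ h (v χ) = 0 := by
          rw [← map_sum, hsum, map_zero]
        rw [← this]
        exact Finset.sum_congr rfl fun χ hχ => (hv χ hχ h).symm
      have h2 : ∑ χ ∈ S, v' χ = 0 := by
        simp only [hv', sub_smul, Finset.sum_sub_distrib, h1, ← Finset.smul_sum, hsum,
          smul_zero, sub_zero]
      have h3 : ∑ χ ∈ S.erase ψ, v' χ = 0 := by
        rw [← Finset.add_sum_erase S v' hψ] at h2
        simpa [hv'] using h2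
      have hzero : ∀ χ ∈ S.erase ψ, v' χ = 0 := by
        refine ih (S.erase ψ) (Finset.erase_ssubset hψ) v' ?_ h3
        intro χ hχ
        exact Submodule.smul_mem _ _ (hv χ (Finset.mem_of_mem_erase hχ))
      have hvφ₀ : v φ₀ = 0 := by
        have := hzero φ₀ (Finset.mem_erase.mpr ⟨hφ₀, hφ₀S⟩)
        simpa [hv', smul_eq_zero, hnek] using this
      -- now remove φ₀ and conclude for ψ
      refine ih (S.erase φ₀) (Finset.erase_ssubset hφ₀S) v ?_ ?_ ψ
        (Finset.mem_erase.mpr ⟨Ne.symm hφ₀, hψ⟩)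
      · intro χ hχ; exact hv χ (Finset.mem_of_mem_erase hχ)
      · rw [← Finset.add_sum_erase S v hφ₀S] at hsum
        simpa [hvφ₀] using hsum

/-- Closure of `𝓜` under finite intersections. -/
lemma inter_mem (𝓜 : Set (Σ H : Subgroup G, (↥H →* kˣ)))
    (hclosed : ∀ p ∈ 𝓜, ∀ q ∈ 𝓜,
      (⟨p.1 ⊓ q.1, p.2.comp (Subgroup.inclusion inf_le_left)⟩
        : Σ H : Subgroup G, (↥H →* kˣ)) ∈ 𝓜 ∧
      (⟨p.1 ⊓ q.1, q.2.comp (Subgroup.inclusion inf_le_right)⟩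
        : Σ H : Subgroup G, (↥H →* kˣ)) ∈ 𝓜) :
    ∀ (S : Finset (Σ H : Subgroup G, (↥H →* kˣ))), ↑S ⊆ 𝓜 →
      ∀ r ∈ 𝓜, ∀ (K : Subgroup G), K = r.1 ⊓ ⨅ q ∈ S, q.1 → ∀ (hle : K ≤ r.1),
      (⟨K, r.2.comp (Subgroup.inclusion hle)⟩ : Σ H : Subgroup G, (↥H →* kˣ)) ∈ 𝓜 := by
  classical
  intro S
  induction S using Finset.induction_on with
  | empty =>
    intro _ r hr K hK hle
    have hKr : K = r.1 := by simpa using hK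
    subst hKr
    exact hr
  | @insert a S _ ih =>
    intro hS r hr K hK hle
    have ha𝓜 : a ∈ 𝓜 := hS (Finset.mem_insert_self a S)
    have hS' : ↑S ⊆ 𝓜 := fun x hx => hS (Finset.mem_insert_of_mem hx)
    have hr' := (hclosed r hr a ha𝓜).1
    have hK' : K = (r.1 ⊓ a.1) ⊓ ⨅ q ∈ S, q.1 := by
      rw [hK, Finset.iInf_insert, ← inf_assoc]
    have hle' : K ≤ r.1 ⊓ a.1 := hK' ▸ inf_le_left
    exact ih hS' ⟨r.1 ⊓ a.1, r.2.comp (Subgroup.inclusion inf_le_left)⟩ hr' K hK' hle'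

end Aux
theorem stmt6 {k G : Type*} [Field k] [Group G]
    {V₁ V₂ V₃ : Type*} [AddCommGroup V₁] [Module k V₁] [AddCommGroup V₂] [Module k V₂]
    [AddCommGroup V₃] [Module k V₃]
    (ρ₁ : Representation k G V₁) (ρ₂ : Representation k G V₂) (ρ₃ : Representation k G V₃)
    (i : V₁ →ₗ[k] V₂) (j : V₂ →ₗ[k] V₃)
    (hi : Function.Injective i) (hj : Function.Surjective j)
    (hexact : LinearMap.range i = LinearMap.ker j)
    (hiequiv : ∀ (g : G) (v : V₁), i (ρ₁ g v) = ρ₂ g (i v))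
    (hjequiv : ∀ (g : G) (v : V₂), j (ρ₂ g v) = ρ₃ g (j v))
    (𝓜 : Set (Σ H : Subgroup G, (↥H →* kˣ)))
    (hclosed : ∀ p ∈ 𝓜, ∀ q ∈ 𝓜,
      (⟨p.1 ⊓ q.1, p.2.comp (Subgroup.inclusion inf_le_left)⟩
        : Σ H : Subgroup G, (↥H →* kˣ)) ∈ 𝓜 ∧
      (⟨p.1 ⊓ q.1, q.2.comp (Subgroup.inclusion inf_le_right)⟩
        : Σ H : Subgroup G, (↥H →* kˣ)) ∈ 𝓜)
    (hsmooth : (⨆ p ∈ 𝓜, eigSubspace ρ₂ p.1 p.2) = ⊤) :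
    (⨆ p ∈ 𝓜, eigSubspace ρ₃ p.1 p.2) = ⊤ ∧
    (⨆ p ∈ 𝓜, eigSubspace ρ₁ p.1 p.2) = ⊤ := by
  classical
  -- j maps eigenspaces into eigenspaces
  have hjmap : ∀ (H : Subgroup G) (φ : ↥H →* kˣ) (v : V₂), v ∈ eigSubspace ρ₂ H φ →
      j v ∈ eigSubspace ρ₃ H φ := by
    intro H φ v hv h
    rw [← hjequiv, hv h, map_smul]
  constructor
  · -- surjection part
    rw [eq_top_iff]
    have hmap : Submodule.map j (⨆ p ∈ 𝓜, eigSubspace ρ₂ p.1 p.2) = ⊤ := by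
      rw [hsmooth, Submodule.map_top, LinearMap.range_eq_top.mpr hj]
    rw [← hmap, Submodule.map_le_iff_le_comap]
    refine iSup₂_le fun p hp => ?_
    intro v hv
    exact Submodule.mem_comap.mpr <|
      Submodule.mem_iSup_of_mem p <| Submodule.mem_iSup_of_mem hp <| hjmap p.1 p.2 v hv
  · -- injection part
    rw [eq_top_iff]
    rintro v -
    have hv2 : i v ∈ ⨆ p : 𝓜, eigSubspace ρ₂ (p : Σ H : Subgroup G, (↥H →* kˣ)).1
        (p : Σ H : Subgroup G, (↥H →* kˣ)).2 := by
      have htop : i v ∈ (⊤ : Submodule k V₂) := trivial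
      rw [← hsmooth, ← iSup_subtype''] at htop
      exact htop
    rw [Submodule.mem_iSup_iff_exists_finsupp] at hv2
    obtain ⟨f, hf, hsum⟩ := hv2
    rw [Finsupp.sum] at hsum
    set T : Finset ↥𝓜 := f.support with hT
    set S : Finset (Σ H : Subgroup G, (↥H →* kˣ)) := T.image Subtype.val with hSdef
    set K : Subgroup G := ⨅ q ∈ S, q.1 with hKdef
    have hKle : ∀ p ∈ T, K ≤ (p : Σ H : Subgroup G, (↥H →* kˣ)).1 := by
      intro p hp
      exact iInf₂_le (p : Σ H : Subgroup G, (↥H →* kˣ)) (Finset.mem_image_of_mem _ hp)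
    -- the restricted character of each pair in the support
    set r : ↥𝓜 → (↥K →* kˣ) := fun p =>
      if hp : p ∈ T then (p : Σ H : Subgroup G, (↥H →* kˣ)).2.comp
        (Subgroup.inclusion (hKle p hp)) else 1 with hr
    -- group the summands by restricted character
    set u : (↥K →* kˣ) → V₂ := fun ψ => ∑ p ∈ T.filter (fun p => r p = ψ), f p with hu
    have husum : ∑ ψ ∈ T.image r, u ψ = i v := by
      rw [← hsum]
      exact Finset.sum_fiberwise_of_maps_to (fun p hp => Finset.mem_image_of_mem r hp) f
    have humem : ∀ ψ, u ψ ∈ eigSubspace ρ₂ K ψ := by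
      intro ψ
      refine Submodule.sum_mem _ fun p hp => ?_
      obtain ⟨hpT, hpψ⟩ := Finset.mem_filter.mp hp
      have := eig_restrict ρ₂ (hKle p hpT) (p : Σ H : Subgroup G, (↥H →* kˣ)).2 (hf p)
      rwa [show (p : Σ H : Subgroup G, (↥H →* kˣ)).2.comp (Subgroup.inclusion (hKle p hpT))
        = ψ from by rw [← hpψ, hr]; simp [hpT]] at this
    -- the images under j sum to zero, hence vanish by independence
    have hjzero : ∀ ψ ∈ T.image r, j (u ψ) = 0 := by
      have hjsum : ∑ ψ ∈ T.image r, j (u ψ) = 0 := by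
        rw [← map_sum, husum]
        have : i v ∈ LinearMap.ker j := hexact ▸ LinearMap.mem_range_self i v
        exact this
      exact eig_indep ρ₃ K (T.image r) (fun ψ => j (u ψ))
        (fun ψ _ => hjmap K ψ (u ψ) (humem ψ)) hjsum
    -- hence each u ψ comes from V₁
    have hw : ∀ ψ ∈ T.image r, ∃ w : V₁, i w = u ψ ∧ w ∈ eigSubspace ρ₁ K ψ := by
      intro ψ hψ
      have : u ψ ∈ LinearMap.range i := by
        rw [hexact]; exact hjzero ψ hψ
      obtain ⟨w, hwi⟩ := this
      refine ⟨w, hwi, fun h => hi ?_⟩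
      rw [hiequiv, hwi, humem ψ h, map_smul, hwi]
    choose w hwi hwmem using hw
    -- each pair (K, ψ) belongs to 𝓜
    have hpairs : ∀ ψ ∈ T.image r, (⟨K, ψ⟩ : Σ H : Subgroup G, (↥H →* kˣ)) ∈ 𝓜 := by
      intro ψ hψ
      obtain ⟨p, hpT, hpψ⟩ := Finset.mem_image.mp hψ
      have hSsub : (↑S : Set (Σ H : Subgroup G, (↥H →* kˣ))) ⊆ 𝓜 := by
        intro x hx
        obtain ⟨q, _, rfl⟩ := Finset.mem_image.mp hx
        exact q.2
      have hle : K ≤ (p : Σ H : Subgroup G, (↥H →* kˣ)).1 := hKle p hpT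
      have hKeq : K = (p : Σ H : Subgroup G, (↥H →* kˣ)).1 ⊓ ⨅ q ∈ S, q.1 :=
        (inf_eq_right.mpr hle).symm
      have := inter_mem 𝓜 hclosed S hSsub (p : Σ H : Subgroup G, (↥H →* kˣ)) p.2 K hKeq hle
      rwa [show (p : Σ H : Subgroup G, (↥H →* kˣ)).2.comp (Subgroup.inclusion hle) = ψ from
        by rw [← hpψ, hr]; simp [hpT]] at this
    -- conclude
    have hveq : v = ∑ ψ ∈ (T.image r).attach, w ψ ψ.2 := by
      apply hi
      rw [map_sum, ← husum, ← Finset.sum_attach (T.image r) u]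
      exact Finset.sum_congr rfl fun ψ _ => (hwi ψ ψ.2).symm
    rw [hveq]
    exact Submodule.sum_mem _ fun ψ _ =>
      Submodule.mem_iSup_of_mem (⟨K, ψ.1⟩ : Σ H : Subgroup G, (↥H →* kˣ))
        (Submodule.mem_iSup_of_mem (hpairs ψ.1 ψ.2) (hwmem ψ.1 ψ.2))
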